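/- The Perazzo cubic f = x_0 u² + x_1 u v + x_2 v² in K[x_0, x_1, x_2, u, v] has identically vanishing Hessian determinant, but its five partial derivatives are linearly independent (so V(f) ⊂ P^4 is not a cone). -/

import Mathlib

open MvPolynomial

set_option maxHeartbeats 4000000 in
/-- The Perazzo cubic `f = x₀u² + x₁uv + x₂v²` (variables `x₀,x₁,x₂,u,v` indexed by
`0,1,2,3,4`) has identically vanishing Hessian determinant, yet its five partial
derivatives are linearly independent, i.e. `V(f) ⊂ ℙ⁴` is not a cone. -/
theorem perazzo_cubic_hessian_zero_not_cone
    {K : Type*} [Field K] [CharZero K]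
    (f : MvPolynomial (Fin 5) K)
    (hf : f = X 0 * X 3 ^ 2 + X 1 * X 3 * X 4 + X 2 * X 4 ^ 2) :
    Matrix.det (Matrix.of fun i j : Fin 5 => pderiv i (pderiv j f)) = 0 ∧
      LinearIndependent K (fun i : Fin 5 => pderiv i f) := by
  have h2 : ∀ i : Fin 5, pderiv i ((2 : MvPolynomial (Fin 5) K)) = 0 := fun i => by
    rw [show (2:MvPolynomial (Fin 5) K) = C 2 from (map_ofNat C 2).symm, pderiv_C]
  constructor
  · subst hf
    have h : (Matrix.of fun i j : Fin 5 => pderiv i (pderiv j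
        ((X 0 * X 3 ^ 2 + X 1 * X 3 * X 4 + X 2 * X 4 ^ 2 : MvPolynomial (Fin 5) K)))) =
        !![0,0,0,2*X 3,0; 0,0,0,X 4,X 3; 0,0,0,0,2*X 4;
           2*X 3,X 4,0,2*X 0,X 1; 0,X 3,2*X 4,X 1,2*X 2] := by
      apply Matrix.ext
      intro i j
      fin_cases i <;> fin_cases j <;>
        · simp [pderiv_mul, pderiv_pow, pderiv_X_self, pderiv_X_of_ne, h2]
          try ring
    rw [h]
    simp [Matrix.det_succ_row_zero, Fin.sum_univ_succ, Fin.succAbove]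
  · have d0 : pderiv 0 f = X 3 ^ 2 := by
      simp [hf, pderiv_mul, pderiv_pow, pderiv_X_self, pderiv_X_of_ne]
    have d1 : pderiv 1 f = X 3 * X 4 := by
      simp [hf, pderiv_mul, pderiv_pow, pderiv_X_self, pderiv_X_of_ne]; try ring
    have d2 : pderiv 2 f = X 4 ^ 2 := by
      simp [hf, pderiv_mul, pderiv_pow, pderiv_X_self, pderiv_X_of_ne]
    have d3 : pderiv 3 f = 2 * X 0 * X 3 + X 1 * X 4 := by
      simp [hf, pderiv_mul, pderiv_pow, pderiv_X_self, pderiv_X_of_ne]; ring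
    have d4 : pderiv 4 f = X 1 * X 3 + 2 * X 2 * X 4 := by
      simp [hf, pderiv_mul, pderiv_pow, pderiv_X_self, pderiv_X_of_ne]; ring
    rw [Fintype.linearIndependent_iff]
    intro g hg
    rw [Fin.sum_univ_five, d0, d1, d2, d3, d4] at hg
    have E : ∀ c : Fin 5 → K,
        g 0 * (c 3)^2 + g 1 * (c 3 * c 4) + g 2 * (c 4)^2
          + g 3 * (2 * c 0 * c 3 + c 1 * c 4) + g 4 * (c 1 * c 3 + 2 * c 2 * c 4) = 0 := by
      intro c
      have h := congrArg (aeval c) hg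
      simp only [map_add, map_smul, map_mul, map_pow, aeval_X, map_zero, map_ofNat,
        smul_eq_mul] at h
      linear_combination h
    have h0 := E ![0,0,0,1,0]
    have h2 := E ![0,0,0,0,1]
    have h1 := E ![0,0,0,1,1]
    have h3 := E ![1,0,0,1,0]
    have h4 := E ![0,0,1,0,1]
    simp only [Matrix.cons_val] at h0 h1 h2 h3 h4
    norm_num [Matrix.cons_val_zero, Matrix.cons_val_one, Matrix.head_cons] at h0 h1 h2 h3 h4
    have e1 : g 1 = 0 := by linear_combination h1 - h0 - h2
    have e3 : g 3 = 0 := by linear_combination h3 / 2 - h0 / 2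
    have e4 : g 4 = 0 := by linear_combination h4 / 2 - h2 / 2
    intro i
    fin_cases i
    · exact h0
    · exact e1
    · exact h2
    · exact e3
    · exact e4
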